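/- Let n ≥ 2 and A ⊆ ℕ a finite digit set with 0 ∈ A. For integers k define b(k) as the number of A-expansions of k (tuples (α₀,…,α_J) with αⱼ ∈ A, α_J ≠ 0, k = Σ αⱼ nʲ), with b(k) = 0 for k < 0 and b(0) = 1. Let cᵢ = 1 if i ∈ A and 0 otherwise. Then for all q ≥ 0 and 0 ≤ d ≤ n−1: b(n·q + d) = Σ_{s ∈ ℤ} c_{n·s + d} · b(q − s). -/

import Mathlib

/-- `l` is an `A`-expansion of `k` in base `n`: all digits in `A`, nonzero leading digit,
and value `k`. The empty list is the expansion of `0`. -/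
def IsExpansion (n : ℕ) (A : Finset ℕ) (k : ℕ) (l : List ℕ) : Prop :=
  (∀ d ∈ l, d ∈ A) ∧ l.getLast? ≠ some 0 ∧ Nat.ofDigits n l = k

/-- Every nonnegative integer has at most one `A`-expansion in base `n`. -/
def UniqueExpansions (n : ℕ) (A : Finset ℕ) : Prop :=
  ∀ k : ℕ, ∀ l₁ l₂ : List ℕ, IsExpansion n A k l₁ → IsExpansion n A k l₂ → l₁ = l₂

/-- The family `f` generates a free semigroup under composition: distinct nonempty
words give distinct composed functions. Composition is left-to-right:
`[u₁,…,u_p] ↦ f u₁ ∘ ⋯ ∘ f u_p`. -/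
def FreeComp {α ι : Type*} (f : ι → α → α) : Prop :=
  ∀ w₁ w₂ : List ι, w₁ ≠ [] → w₂ ≠ [] →
    (w₁.map f).foldr (· ∘ ·) id = (w₂.map f).foldr (· ∘ ·) id → w₁ = w₂

/-- Number of `A`-expansions of the integer `k` (zero for negative `k`;
the empty expansion gives `bcount n A 0 = 1`). -/
noncomputable def bcount (n : ℕ) (A : Finset ℕ) (k : ℤ) : ℕ :=
  Set.ncard {l : List ℕ |
    (∀ d ∈ l, d ∈ A) ∧ l.getLast? ≠ some 0 ∧ (Nat.ofDigits n l : ℤ) = k}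

/-- Indicator sequence of `A`, indexed by `ℤ`. -/
def ind (A : Finset ℕ) (i : ℤ) : ℕ := if 0 ≤ i ∧ i.toNat ∈ A then 1 else 0

lemma length_le_ofDigits (n : ℕ) (hn : 2 ≤ n) :
    ∀ l : List ℕ, l.getLast? ≠ some 0 → l.length ≤ Nat.ofDigits n l := by
  intro l
  induction l with
  | nil => simp
  | cons a t ih =>
    intro h
    match t, ih, h with
    | [], _, h =>
      simp [Nat.ofDigits_cons] at h ⊢
      omega
    | b :: t', ih, h =>
      rw [List.getLast?_cons_cons] at h
      have h1 := ih h
      have h2 : 1 ≤ (b :: t').length := by simp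
      simp only [Nat.ofDigits_cons, List.length_cons] at *
      nlinarith

def Eset (n : ℕ) (A : Finset ℕ) (k : ℤ) : Set (List ℕ) :=
  {l : List ℕ | (∀ d ∈ l, d ∈ A) ∧ l.getLast? ≠ some 0 ∧ (Nat.ofDigits n l : ℤ) = k}

lemma finite_E (n : ℕ) (hn : 2 ≤ n) (A : Finset ℕ) (k : ℤ) : (Eset n A k).Finite := by
  have hsub : Eset n A k ⊆ (fun l : List ↥A => l.map Subtype.val) ''
      {l : List ↥A | l.length ≤ k.toNat} := by
    rintro l ⟨hA, hlast, hval⟩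
    refine ⟨l.attach.map (fun x => ⟨x.1, hA x.1 x.2⟩), ?_, ?_⟩
    · simp only [Set.mem_setOf_eq, List.length_map, List.length_attach]
      rw [← Nat.coe_ofDigits] at hval
      have h1 := length_le_ofDigits n hn l hlast
      omega
    · simp [List.map_map]
  exact ((List.finite_length_le ↥A k.toNat).image _).subset hsub

lemma bcount_eq_card (n : ℕ) (hn : 2 ≤ n) (A : Finset ℕ) (k : ℤ) :
    bcount n A k = (finite_E n hn A k).toFinset.card :=
  Set.ncard_eq_toFinset_card _ _

theorem stmt3 (n : ℕ) (hn : 2 ≤ n) (A : Finset ℕ) (h0 : 0 ∈ A)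
    (q d : ℤ) (hq : 0 ≤ q) (hd0 : 0 ≤ d) (hd : d ≤ (n : ℤ) - 1) :
    bcount n A ((n : ℤ) * q + d) =
      ∑ᶠ s : ℤ, ind A ((n : ℤ) * s + d) * bcount n A (q - s) := by
  classical
  have hn0 : (n : ℤ) ≠ 0 := by positivity
  set T' : Finset ℤ :=
    (A.image (fun a : ℕ => ((a : ℤ) - d) / n)).filter
      (fun s => 0 ≤ (n : ℤ) * s + d ∧ ((n : ℤ) * s + d).toNat ∈ A) with hT'
  have hmemT' : ∀ s : ℤ, s ∈ T' ↔ 0 ≤ (n : ℤ) * s + d ∧ ((n : ℤ) * s + d).toNat ∈ A := by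
    intro s
    constructor
    · intro h; exact (Finset.mem_filter.1 h).2
    · intro h
      refine Finset.mem_filter.2 ⟨Finset.mem_image.2 ⟨((n : ℤ) * s + d).toNat, h.2, ?_⟩, h⟩
      rw [Int.toNat_of_nonneg h.1, show (n : ℤ) * s + d - d = (n : ℤ) * s from by ring,
        Int.mul_ediv_cancel_left _ hn0]
  -- reduce the finsum to a sum over T'
  have hsupp : (Function.support fun s : ℤ =>
      ind A ((n : ℤ) * s + d) * bcount n A (q - s)) ⊆ ↑T' := by
    intro s hs
    have hind : ind A ((n : ℤ) * s + d) ≠ 0 := by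
      intro h; exact hs (by simp [h])
    unfold ind at hind
    split_ifs at hind with hc
    · exact Finset.mem_coe.2 ((hmemT' s).2 hc)
    · exact absurd rfl hind
  rw [finsum_eq_sum_of_support_subset _ hsupp]
  have hstep : ∑ s ∈ T', ind A ((n : ℤ) * s + d) * bcount n A (q - s)
      = ∑ s ∈ T', bcount n A (q - s) := by
    refine Finset.sum_congr rfl fun s hs => ?_
    unfold ind
    rw [if_pos ((hmemT' s).1 hs), one_mul]
  rw [hstep]
  -- the gluing map
  set g : ℤ → List ℕ → List ℕ := fun s t =>
    if t = [] ∧ (n : ℤ) * s + d = 0 then [] else ((n : ℤ) * s + d).toNat :: t with hg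
  have hginj : ∀ s : ℤ, Function.Injective (g s) := by
    intro s t1 t2 h
    simp only [hg] at h
    by_cases h1 : t1 = [] ∧ (n : ℤ) * s + d = 0 <;>
      by_cases h2 : t2 = [] ∧ (n : ℤ) * s + d = 0
    · exact h1.1.trans h2.1.symm
    · rw [if_pos h1, if_neg h2] at h; exact absurd h (by simp)
    · rw [if_neg h1, if_pos h2] at h; exact absurd h (by simp)
    · rw [if_neg h1, if_neg h2] at h; simpa using h
  -- key Finset identity
  have key : (finite_E n hn A ((n : ℤ) * q + d)).toFinset =
      T'.biUnion (fun s => ((finite_E n hn A (q - s)).toFinset).image (g s)) := by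
    ext l
    simp only [Set.Finite.mem_toFinset, Finset.mem_biUnion, Finset.mem_image,
      Eset, Set.mem_setOf_eq]
    constructor
    · rintro ⟨hA, hlast, hval⟩
      match l, hA, hlast, hval with
      | [], hA, hlast, hval =>
        have hK : (n : ℤ) * q + d = 0 := by simpa [Nat.ofDigits] using hval.symm
        have hd0' : d = 0 := by nlinarith
        have hq0 : q = 0 := by nlinarith
        refine ⟨0, (hmemT' 0).2 ⟨by simp [hd0'], by simpa [hd0'] using h0⟩,
          [], ⟨by simp, by simp, by simp [Nat.ofDigits, hq0]⟩, ?_⟩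
        simp [hg, hd0']
      | a :: t, hA, hlast, hval =>
        have ha : a ∈ A := hA a (by simp)
        have hvala : (a : ℤ) + (n : ℤ) * Nat.ofDigits (n : ℤ) t = (n : ℤ) * q + d := by
          exact hval
        refine ⟨q - Nat.ofDigits (n : ℤ) t, ?_, t, ⟨?_, ?_, ?_⟩, ?_⟩
        · have hns : (n : ℤ) * (q - Nat.ofDigits (n : ℤ) t) + d = (a : ℤ) := by ring_nf; linarith
          exact (hmemT' _).2 ⟨by rw [hns]; positivity, by rw [hns]; simpa using ha⟩
        · exact fun x hx => hA x (List.mem_cons_of_mem _ hx)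
        · match t, hlast with
          | [], _ => simp
          | b :: t', hlast => rwa [List.getLast?_cons_cons] at hlast
        · ring
        · have hns : (n : ℤ) * (q - Nat.ofDigits (n : ℤ) t) + d = (a : ℤ) := by ring_nf; linarith
          simp only [hg]
          split_ifs with hc
          · exfalso
            obtain ⟨ht0, h2⟩ := hc
            have ha0 : a = 0 := by
              have : (a : ℤ) = 0 := by rw [← hns, h2]
              exact_mod_cast this
            subst ht0
            exact hlast (by simp [ha0])
          · rw [hns]; simp
    · rintro ⟨s, hsT', t, ⟨htA, htlast, htval⟩, rfl⟩
      obtain ⟨hge, hmem⟩ := (hmemT' s).1 hsT'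
      simp only [hg]
      split_ifs with hc
      · obtain ⟨rfl, h2⟩ := hc
        have h00 : (Nat.ofDigits (n : ℤ) ([] : List ℕ) : ℤ) = 0 := by simp [Nat.ofDigits]
        have hsq : s = q := by rw [h00] at htval; linarith
        refine ⟨by simp, by simp, ?_⟩
        rw [h00]; rw [hsq] at h2; linarith
      · refine ⟨?_, ?_, ?_⟩
        · intro x hx
          rcases List.mem_cons.1 hx with rfl | hx
          · exact hmem
          · exact htA x hx
        · rcases t with _ | ⟨b, t'⟩
          · have hne : (n : ℤ) * s + d ≠ 0 := fun h => hc ⟨rfl, h⟩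
            simp only [List.getLast?_singleton, ne_eq, Option.some.injEq]
            omega
          · rw [List.getLast?_cons_cons]; exact htlast
        · have hcons : Nat.ofDigits ((n : ℕ) : ℤ) ((((n : ℤ) * s + d).toNat) :: t)
              = ((((n : ℤ) * s + d).toNat : ℕ) : ℤ) + (n : ℤ) * Nat.ofDigits ((n : ℕ) : ℤ) t := rfl
          rw [hcons, Int.toNat_of_nonneg hge, htval]
          ring
  -- disjointness
  have hdisj : ∀ s1 ∈ T', ∀ s2 ∈ T', s1 ≠ s2 →
      Disjoint (((finite_E n hn A (q - s1)).toFinset).image (g s1))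
        (((finite_E n hn A (q - s2)).toFinset).image (g s2)) := by
    intro s1 h1 s2 h2 hne
    rw [Finset.disjoint_left]
    rintro l hl1 hl2
    obtain ⟨t1, _, rfl⟩ := Finset.mem_image.1 hl1
    obtain ⟨t2, _, heq⟩ := Finset.mem_image.1 hl2
    have hge1 := ((hmemT' s1).1 h1).1
    have hge2 := ((hmemT' s2).1 h2).1
    apply hne
    simp only [hg] at heq
    by_cases c1 : t1 = [] ∧ (n : ℤ) * s1 + d = 0 <;>
      by_cases c2 : t2 = [] ∧ (n : ℤ) * s2 + d = 0
    · have := c1.2.trans c2.2.symm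
      exact mul_left_cancel₀ hn0 (by linarith [c1.2, c2.2])
    · rw [if_neg c2, if_pos c1] at heq; exact absurd heq (by simp)
    · rw [if_pos c2, if_neg c1] at heq; exact absurd heq (by simp)
    · rw [if_neg c1, if_neg c2] at heq
      have hhead : ((n : ℤ) * s2 + d).toNat = ((n : ℤ) * s1 + d).toNat := by
        injection heq
      have : (n : ℤ) * s1 + d = (n : ℤ) * s2 + d := by omega
      exact mul_left_cancel₀ hn0 (by linarith)
  rw [bcount_eq_card n hn A, key, Finset.card_biUnion hdisj]
  refine Finset.sum_congr rfl fun s hs => ?_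
  rw [Finset.card_image_of_injective _ (hginj s), ← bcount_eq_card n hn A]
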